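/- Let g and g₀ be positive definite Hermitian n×n matrices and ξ ∈ ℂⁿ. Then |ξ|²_{g₀} ≤ |ξ|²_g · (tr_g g₀)^(n-1) · (det g / det g₀), where tr_g g₀ = tr(g⁻¹ g₀) and |ξ|²_g = ξ* g⁻¹ ξ. -/

import Mathlib

open Matrix
open scoped ComplexOrder

lemma aux_real {n : ℕ} (lam : Fin n → ℝ) (hlam : ∀ i, 0 < lam i) (c : Fin n → ℝ)
    (hc : ∀ i, 0 ≤ c i) :
    ∑ i, (lam i)⁻¹ * c i ≤ (∑ i, c i) * (∑ i, lam i) ^ (n - 1) / ∏ i, lam i := by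
  have hprod : (0:ℝ) < ∏ i, lam i := Finset.prod_pos fun i _ => hlam i
  set μ : ℝ := (∑ i, lam i) ^ (n - 1) / ∏ i, lam i with hμ
  have hbound : ∀ i, (lam i)⁻¹ ≤ μ := by
    intro i
    rw [hμ, le_div_iff₀ hprod, ← Finset.mul_prod_erase Finset.univ lam (Finset.mem_univ i),
      inv_mul_cancel_left₀ (hlam i).ne']
    calc ∏ j ∈ Finset.univ.erase i, lam j
        ≤ ∏ j ∈ Finset.univ.erase i, (∑ k, lam k) := by
          refine Finset.prod_le_prod (fun j _ => (hlam j).le) (fun j _ => ?_)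
          exact Finset.single_le_sum (fun k _ => (hlam k).le) (Finset.mem_univ j)
      _ = (∑ k, lam k) ^ (n - 1) := by
          rw [Finset.prod_const, Finset.card_erase_of_mem (Finset.mem_univ i),
            Finset.card_univ, Fintype.card_fin]
  calc ∑ i, (lam i)⁻¹ * c i ≤ ∑ i, μ * c i := by
        refine Finset.sum_le_sum fun i _ => ?_
        exact mul_le_mul_of_nonneg_right (hbound i) (hc i)
    _ = (∑ i, c i) * μ := by rw [← Finset.mul_sum, mul_comm]
    _ = (∑ i, c i) * (∑ i, lam i) ^ (n - 1) / ∏ i, lam i := by rw [hμ, mul_div_assoc]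

lemma key {n : ℕ} {A : Matrix (Fin n) (Fin n) ℂ} (hA : A.PosDef) (η : Fin n → ℂ) :
    (star η ⬝ᵥ A⁻¹ *ᵥ η).re ≤ (star η ⬝ᵥ η).re * A.trace.re ^ (n - 1) / A.det.re := by
  classical
  set U : Matrix (Fin n) (Fin n) ℂ := (hA.1.eigenvectorUnitary : Matrix (Fin n) (Fin n) ℂ) with hU
  set lam : Fin n → ℝ := hA.1.eigenvalues with hlamdef
  have hlam : ∀ i, 0 < lam i := hA.eigenvalues_pos
  have hUU : U * star U = 1 := (Matrix.mem_unitaryGroup_iff).mp hA.1.eigenvectorUnitary.2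
  have hUU' : star U * U = 1 := (Matrix.mem_unitaryGroup_iff').mp hA.1.eigenvectorUnitary.2
  set D : Matrix (Fin n) (Fin n) ℂ := diagonal (fun i => (lam i : ℂ)) with hD
  have hspec : A = U * D * star U := hA.1.spectral_theorem
  set Dinv : Matrix (Fin n) (Fin n) ℂ := diagonal (fun i => ((lam i : ℂ))⁻¹) with hDinv
  have hDD : D * Dinv = 1 := by
    rw [hD, hDinv, diagonal_mul_diagonal]
    have : (fun i => (lam i : ℂ) * ((lam i : ℂ))⁻¹) = fun _ => (1:ℂ) := by
      funext i
      exact mul_inv_cancel₀ (by exact_mod_cast (hlam i).ne')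
    rw [this, diagonal_one]
  have hAinv : A⁻¹ = U * Dinv * star U := by
    refine inv_eq_right_inv ?_
    rw [hspec]
    calc U * D * star U * (U * Dinv * star U)
        = U * (D * ((star U * U) * (Dinv * star U))) := by simp only [mul_assoc]
      _ = U * ((D * Dinv) * star U) := by rw [hUU']; simp only [one_mul, mul_assoc]
      _ = 1 := by rw [hDD, one_mul, hUU]
  set y : Fin n → ℂ := star U *ᵥ η with hy
  have hstary : star y = star η ᵥ* U := by
    rw [hy, star_mulVec, star_eq_conjTranspose, conjTranspose_conjTranspose]
  have e1 : star η ⬝ᵥ A⁻¹ *ᵥ η = star y ⬝ᵥ Dinv *ᵥ y := by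
    rw [hAinv, ← mulVec_mulVec, ← mulVec_mulVec, dotProduct_mulVec (star η) U, ← hstary, hy]
  have e2 : star η ⬝ᵥ η = star y ⬝ᵥ y := by
    rw [hstary, hy, ← dotProduct_mulVec, mulVec_mulVec, hUU, one_mulVec]
  have etr : A.trace.re = ∑ i, lam i := by
    rw [hspec, trace_mul_cycle, hUU', one_mul, hD, trace_diagonal, Complex.re_sum]
    simp
  have edet : A.det.re = ∏ i, lam i := by
    rw [hA.1.det_eq_prod_eigenvalues, ← hlamdef]
    norm_cast
  have eQ : (star η ⬝ᵥ A⁻¹ *ᵥ η).re = ∑ i, (lam i)⁻¹ * Complex.normSq (y i) := by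
    rw [e1, dotProduct, Complex.re_sum]
    refine Finset.sum_congr rfl fun i _ => ?_
    rw [hDinv, mulVec_diagonal]
    have : star y i * (((lam i : ℂ))⁻¹ * y i)
        = ((((lam i)⁻¹ : ℝ) : ℂ)) * (star y i * y i) := by push_cast; ring
    rw [this]
    simp [Complex.mul_conj', Complex.mul_conj, Complex.normSq_apply]
  have eN : (star η ⬝ᵥ η).re = ∑ i, Complex.normSq (y i) := by
    rw [e2, dotProduct, Complex.re_sum]
    refine Finset.sum_congr rfl fun i _ => ?_
    simp [Complex.mul_conj', Complex.mul_conj, Complex.normSq_apply]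
  rw [eQ, eN, etr, edet]
  exact aux_real lam hlam _ (fun i => Complex.normSq_nonneg _)

/-- Pointwise inequality `|ξ|²_{g₀} ≤ |ξ|²_g · (tr_g g₀)^(n-1) · (det g / det g₀)`
for positive definite Hermitian matrices `g, g₀` and a covector `ξ`, where
`|ξ|²_g = ξ* g⁻¹ ξ` and `tr_g g₀ = tr(g⁻¹ g₀)`. -/
theorem stmt_5 (n : ℕ) (g g₀ : Matrix (Fin n) (Fin n) ℂ)
    (hg : g.PosDef) (hg₀ : g₀.PosDef) (ξ : Fin n → ℂ) :
    (star ξ ⬝ᵥ (g₀⁻¹ *ᵥ ξ)).re ≤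
      (star ξ ⬝ᵥ (g⁻¹ *ᵥ ξ)).re * ((g⁻¹ * g₀).trace).re ^ (n - 1) *
        (g.det.re / g₀.det.re) := by
  classical
  open scoped MatrixOrder in set S := CFC.sqrt g with hSdef
  open scoped MatrixOrder in have hSps : S.PosSemidef := (CFC.sqrt_nonneg g).posSemidef
  have hSH : S.IsHermitian := hSps.1
  open scoped MatrixOrder in have hSS : S * S = g := CFC.sqrt_mul_sqrt_self g hg.posSemidef.nonneg
  have hdetg : g.det ≠ 0 := hg.det_pos.ne'
  have hdetS : IsUnit S.det := by
    have h : S.det * S.det = g.det := by rw [← det_mul, hSS]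
    exact isUnit_iff_ne_zero.mpr (fun h0 => hdetg (by rw [← h, h0, mul_zero]))
  have hS1 : S * S⁻¹ = 1 := mul_nonsing_inv _ hdetS
  have hS1' : S⁻¹ * S = 1 := nonsing_inv_mul _ hdetS
  have hSiH : S⁻¹.IsHermitian := hSH.inv
  set A := S⁻¹ * g₀ * S⁻¹ with hAdef
  have hAH : A.IsHermitian := by
    have h := isHermitian_conjTranspose_mul_mul S⁻¹ hg₀.1
    rwa [hSiH.eq] at h
  have hmv : ∀ x : Fin n → ℂ, A *ᵥ x = S⁻¹ *ᵥ (g₀ *ᵥ (S⁻¹ *ᵥ x)) := by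
    intro x
    rw [hAdef, ← mulVec_mulVec, ← mulVec_mulVec]
  have hApos : A.PosDef := by
    refine PosDef.of_dotProduct_mulVec_pos hAH fun x hx => ?_
    have hxS : S⁻¹ *ᵥ x ≠ 0 := by
      intro h0
      apply hx
      have : (S * S⁻¹) *ᵥ x = x := by rw [hS1, one_mulVec]
      rw [← this, ← mulVec_mulVec, h0, mulVec_zero]
    have hform : star x ⬝ᵥ A *ᵥ x = star (S⁻¹ *ᵥ x) ⬝ᵥ g₀ *ᵥ (S⁻¹ *ᵥ x) := by
      rw [hmv, dotProduct_mulVec, star_mulVec, hSiH.eq]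
    rw [hform]
    exact hg₀.dotProduct_mulVec_pos hxS
  set η : Fin n → ℂ := S⁻¹ *ᵥ ξ with hη
  clear_value S A η
  have hstareta : star η = star ξ ᵥ* S⁻¹ := by rw [hη, star_mulVec, hSiH.eq]
  have hginv : g⁻¹ = S⁻¹ * S⁻¹ := by rw [← hSS, Matrix.mul_inv_rev]
  have hg₀eq : g₀ = S * A * S := by
    calc g₀ = (S * S⁻¹) * g₀ * (S⁻¹ * S) := by rw [hS1, hS1', one_mul, mul_one]
      _ = S * A * S := by rw [hAdef]; simp only [mul_assoc]
  have hg₀inv : g₀⁻¹ = S⁻¹ * A⁻¹ * S⁻¹ := by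
    rw [hg₀eq, Matrix.mul_inv_rev, Matrix.mul_inv_rev, ← mul_assoc]
  have E2 : star ξ ⬝ᵥ g₀⁻¹ *ᵥ ξ = star η ⬝ᵥ A⁻¹ *ᵥ η := by
    rw [hg₀inv, ← mulVec_mulVec, ← mulVec_mulVec, dotProduct_mulVec, ← hstareta, hη]
  have E1 : star ξ ⬝ᵥ g⁻¹ *ᵥ ξ = star η ⬝ᵥ η := by
    rw [hginv, ← mulVec_mulVec, dotProduct_mulVec, ← hstareta, hη]
  have E3 : (g⁻¹ * g₀).trace = A.trace := by
    rw [hginv, hAdef, mul_assoc, trace_mul_comm]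
  have hdetg₀ : g₀.det = A.det * g.det := by
    calc g₀.det = (S * A * S).det := by rw [hg₀eq]
      _ = S.det * A.det * S.det := by rw [det_mul, det_mul]
      _ = A.det * g.det := by rw [← hSS, det_mul]; ring
  have hgre : 0 < g.det.re := by simpa using (Complex.lt_def.mp hg.det_pos).1
  have hgim : g.det.im = 0 := by simpa using (Complex.lt_def.mp hg.det_pos).2.symm
  have hAre : 0 < A.det.re := by simpa using (Complex.lt_def.mp hApos.det_pos).1
  have hAim : A.det.im = 0 := by simpa using (Complex.lt_def.mp hApos.det_pos).2.symm
  have hdre : g.det.re / g₀.det.re = 1 / A.det.re := by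
    have : g₀.det.re = A.det.re * g.det.re := by
      rw [hdetg₀, Complex.mul_re, hAim, hgim]; ring
    rw [this]
    field_simp
  rw [E1, E2, E3, hdre, mul_one_div]
  exact key hApos η
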